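/- Let G be a finite group acting on a finite set S, let f : S → ℝ, and define the orbital arithmetic mean ā(x) = |Orb(x)|^{-1} Σ_{y ∈ Orb(x)} f(y) and geometric mean ḡ(x) = (Π_{y ∈ Orb(x)} f(y))^{1/|Orb(x)|} for f > 0. Then 0 ≤ ā(x) − ḡ(x) ≤ Var_{y ∈ Orb(x)}(f(y)) / (2·min_{y ∈ Orb(x)} f(y)), where Var denotes the variance over the uniform distribution on the orbit. -/

import Mathlib

open Finset

private lemma logB {x : ℝ} (hx : 1 ≤ x) : x - 1 - (x - 1) ^ 2 / 2 ≤ Real.log x := by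
  have hlogc : ContinuousOn Real.log (Set.Ici (1:ℝ)) := by
    apply Real.continuousOn_log.mono
    intro y hy
    simp only [Set.mem_Ici] at hy
    simp only [Set.mem_compl_iff, Set.mem_singleton_iff]
    intro h; rw [h] at hy; norm_num at hy
  have H : MonotoneOn (fun x : ℝ => Real.log x - (x - 1) + (x - 1) ^ 2 / 2) (Set.Ici 1) := by
    apply monotoneOn_of_deriv_nonneg (convex_Ici 1)
    · exact (hlogc.sub (by fun_prop)).add (by fun_prop)
    · intro y hy
      rw [interior_Ici] at hy
      have hy1 : (1:ℝ) < y := hy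
      have hD : HasDerivAt (fun x : ℝ => Real.log x - (x - 1) + (x - 1) ^ 2 / 2)
          (y⁻¹ - 1 + (2 * (y - 1) ^ 1 * 1) / 2) y :=
        (((Real.hasDerivAt_log (by linarith)).sub
          ((hasDerivAt_id y).sub_const 1)).add
          ((((hasDerivAt_id y).sub_const 1).pow 2).div_const 2))
      exact hD.differentiableAt.differentiableWithinAt
    · intro y hy
      rw [interior_Ici] at hy
      have hy1 : (1:ℝ) < y := hy
      have hy0 : (0:ℝ) < y := by linarith
      have hD : HasDerivAt (fun x : ℝ => Real.log x - (x - 1) + (x - 1) ^ 2 / 2)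
          (y⁻¹ - 1 + (2 * (y - 1) ^ 1 * 1) / 2) y :=
        (((Real.hasDerivAt_log (by linarith)).sub
          ((hasDerivAt_id y).sub_const 1)).add
          ((((hasDerivAt_id y).sub_const 1).pow 2).div_const 2))
      rw [hD.deriv]
      have he : y⁻¹ - 1 + (2 * (y - 1) ^ 1 * 1) / 2 = (y - 1) ^ 2 / y := by
        field_simp; ring
      rw [he]; positivity
  have := H (by simp : (1:ℝ) ∈ Set.Ici 1) (Set.mem_Ici.2 hx) hx
  simp only [Real.log_one] at this
  nlinarith [this]

private lemma logA {x : ℝ} (hx0 : 0 < x) (hx1 : x ≤ 1) :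
    x - 1 - (x - 1) ^ 2 / (2 * x) ≤ Real.log x := by
  have hlogc : ContinuousOn Real.log (Set.Ioc (0:ℝ) 1) := by
    apply Real.continuousOn_log.mono
    intro y hy
    simp only [Set.mem_Ioc] at hy
    simp only [Set.mem_compl_iff, Set.mem_singleton_iff]
    intro h; rw [h] at hy; exact absurd hy.1 (by norm_num)
  have H : AntitoneOn (fun x : ℝ => Real.log x - (x - 1) + (x - 1) ^ 2 / (2 * x))
      (Set.Ioc 0 1) := by
    apply antitoneOn_of_deriv_nonpos (convex_Ioc 0 1)
    · refine (hlogc.sub (by fun_prop)).add (ContinuousOn.div (by fun_prop) (by fun_prop) ?_)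
      intro y hy
      simp only [Set.mem_Ioc] at hy
      have := hy.1; positivity
    · intro y hy
      rw [interior_Ioc] at hy
      obtain ⟨hy0, hy1⟩ := hy
      have hD : HasDerivAt (fun x : ℝ => Real.log x - (x - 1) + (x - 1) ^ 2 / (2 * x))
          (y⁻¹ - 1 + ((2 * (y - 1) ^ 1 * 1) * (2 * y) - (y - 1) ^ 2 * 2) / (2 * y) ^ 2) y :=
        (((Real.hasDerivAt_log (ne_of_gt hy0)).sub
          ((hasDerivAt_id y).sub_const 1)).add
          ((((hasDerivAt_id y).sub_const 1).pow 2).div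
            (by simpa using (hasDerivAt_id y).const_mul 2 :
              HasDerivAt (fun x : ℝ => 2 * x) 2 y) (by positivity)))
      exact hD.differentiableAt.differentiableWithinAt
    · intro y hy
      rw [interior_Ioc] at hy
      obtain ⟨hy0, hy1⟩ := hy
      have hD : HasDerivAt (fun x : ℝ => Real.log x - (x - 1) + (x - 1) ^ 2 / (2 * x))
          (y⁻¹ - 1 + ((2 * (y - 1) ^ 1 * 1) * (2 * y) - (y - 1) ^ 2 * 2) / (2 * y) ^ 2) y :=
        (((Real.hasDerivAt_log (ne_of_gt hy0)).sub
          ((hasDerivAt_id y).sub_const 1)).add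
          ((((hasDerivAt_id y).sub_const 1).pow 2).div
            (by simpa using (hasDerivAt_id y).const_mul 2 :
              HasDerivAt (fun x : ℝ => 2 * x) 2 y) (by positivity)))
      rw [hD.deriv]
      have he : y⁻¹ - 1 + ((2 * (y - 1) ^ 1 * 1) * (2 * y) - (y - 1) ^ 2 * 2) / (2 * y) ^ 2
          = -((y - 1) ^ 2 / (2 * y ^ 2)) := by
        field_simp; ring
      rw [he]
      have : (0:ℝ) ≤ (y - 1) ^ 2 / (2 * y ^ 2) := by positivity
      linarith
  have := H (Set.mem_Ioc.2 ⟨hx0, hx1⟩) (by simp : (1:ℝ) ∈ Set.Ioc 0 1) hx1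
  simp only [Real.log_one] at this
  nlinarith [this]

private lemma log_pointwise {m a t : ℝ} (hm : 0 < m) (hma : m ≤ a) (hmt : m ≤ t) :
    Real.log a + (t - a) / a - (t - a) ^ 2 / (2 * m * a) ≤ Real.log t := by
  have ha : 0 < a := lt_of_lt_of_le hm hma
  have ht : 0 < t := lt_of_lt_of_le hm hmt
  have hlog : Real.log t - Real.log a = Real.log (t / a) := (Real.log_div ht.ne' ha.ne').symm
  rcases le_total a t with h | h
  · have hx : 1 ≤ t / a := (one_le_div ha).2 h
    have h0 := logB hx
    rw [← hlog] at h0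
    have e1 : t / a - 1 = (t - a) / a := by rw [sub_div, div_self ha.ne']
    rw [e1] at h0
    have e2 : ((t - a) / a) ^ 2 / 2 ≤ (t - a) ^ 2 / (2 * m * a) := by
      have h1 : ((t - a) / a) ^ 2 / 2 = (t - a) ^ 2 / (2 * a * a) := by
        rw [div_pow, div_div]; congr 1; ring
      rw [h1]
      gcongr
    linarith
  · have hx0 : 0 < t / a := by positivity
    have hx1 : t / a ≤ 1 := (div_le_one ha).2 h
    have h0 := logA hx0 hx1
    rw [← hlog] at h0
    have e1 : t / a - 1 = (t - a) / a := by rw [sub_div, div_self ha.ne']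
    rw [e1] at h0
    have e2 : ((t - a) / a) ^ 2 / (2 * (t / a)) ≤ (t - a) ^ 2 / (2 * m * a) := by
      have h1 : ((t - a) / a) ^ 2 / (2 * (t / a)) = (t - a) ^ 2 / (2 * t * a) := by
        rw [div_pow, div_div]; congr 1; field_simp
      rw [h1]
      gcongr
    linarith

private lemma am_gm_deficiency_finset {ι : Type*} (s : Finset ι) (hs : s.Nonempty)
    (f : ι → ℝ) (hf : ∀ y ∈ s, 0 < f y) :
    0 ≤ (s.card : ℝ)⁻¹ * ∑ y ∈ s, f y - (∏ y ∈ s, f y) ^ ((s.card : ℝ)⁻¹) ∧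
    (s.card : ℝ)⁻¹ * ∑ y ∈ s, f y - (∏ y ∈ s, f y) ^ ((s.card : ℝ)⁻¹)
      ≤ ((s.card : ℝ)⁻¹ * ∑ y ∈ s, (f y - (s.card : ℝ)⁻¹ * ∑ z ∈ s, f z) ^ 2)
          / (2 * s.inf' hs f) := by
  set n : ℝ := (s.card : ℝ) with hn_def
  have hn : 0 < n := by
    rw [hn_def]
    exact_mod_cast Finset.card_pos.2 hs
  set a : ℝ := n⁻¹ * ∑ y ∈ s, f y with ha_def
  set m : ℝ := s.inf' hs f with hm_def
  have hm : 0 < m := by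
    obtain ⟨y, hy, hfy⟩ := Finset.exists_mem_eq_inf' hs f
    rw [hm_def, hfy]; exact hf y hy
  have hfm : ∀ y ∈ s, m ≤ f y := fun y hy => Finset.inf'_le f hy
  have hsum : ∑ y ∈ s, f y = n * a := by
    rw [ha_def, ← mul_assoc, mul_inv_cancel₀ hn.ne', one_mul]
  have hma : m ≤ a := by
    have h1 : ∑ y ∈ s, m ≤ ∑ y ∈ s, f y := Finset.sum_le_sum hfm
    rw [Finset.sum_const, nsmul_eq_mul, ← hn_def, hsum] at h1
    exact le_of_mul_le_mul_left h1 hn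
  have ha : 0 < a := lt_of_lt_of_le hm hma
  have hprod : 0 < ∏ y ∈ s, f y := Finset.prod_pos hf
  have hgexp : (∏ y ∈ s, f y) ^ (n⁻¹) = Real.exp (n⁻¹ * ∑ y ∈ s, Real.log (f y)) := by
    rw [Real.rpow_def_of_pos hprod, ← Real.log_prod (s := s) (f := f) (fun y hy => (hf y hy).ne')]
    ring_nf
  set V : ℝ := n⁻¹ * ∑ y ∈ s, (f y - a) ^ 2 with hV_def
  have hV : 0 ≤ V := by
    apply mul_nonneg (inv_nonneg.2 hn.le)
    exact Finset.sum_nonneg fun y _ => sq_nonneg _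
  have hsa : ∑ y ∈ s, (f y - a) = 0 := by
    rw [Finset.sum_sub_distrib, hsum, Finset.sum_const, nsmul_eq_mul, ← hn_def, sub_self]
  have hsq : ∑ y ∈ s, (f y - a) ^ 2 = n * V := by
    rw [hV_def, ← mul_assoc, mul_inv_cancel₀ hn.ne', one_mul]
  constructor
  · rw [sub_nonneg, hgexp]
    have hle : ∀ y ∈ s, Real.log (f y) ≤ Real.log a + (f y - a) / a := by
      intro y hy
      have h1 : Real.log (f y / a) ≤ f y / a - 1 :=
        Real.log_le_sub_one_of_pos (div_pos (hf y hy) ha)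
      rw [Real.log_div (hf y hy).ne' ha.ne'] at h1
      have e1 : f y / a - 1 = (f y - a) / a := by rw [sub_div, div_self ha.ne']
      rw [e1] at h1
      linarith
    have hsum2 : ∑ y ∈ s, Real.log (f y) ≤ ∑ y ∈ s, (Real.log a + (f y - a) / a) :=
      Finset.sum_le_sum hle
    have hsum3 : ∑ y ∈ s, (Real.log a + (f y - a) / a) = n * Real.log a := by
      rw [Finset.sum_add_distrib, Finset.sum_const, nsmul_eq_mul, ← hn_def,
        ← Finset.sum_div, hsa, zero_div, add_zero]
    have h4 : n⁻¹ * ∑ y ∈ s, Real.log (f y) ≤ Real.log a := by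
      have h5 : n⁻¹ * ∑ y ∈ s, Real.log (f y) ≤ n⁻¹ * (n * Real.log a) := by
        apply mul_le_mul_of_nonneg_left _ (inv_nonneg.2 hn.le)
        rw [← hsum3]; exact hsum2
      rwa [← mul_assoc, inv_mul_cancel₀ hn.ne', one_mul] at h5
    calc Real.exp (n⁻¹ * ∑ y ∈ s, Real.log (f y)) ≤ Real.exp (Real.log a) :=
          Real.exp_le_exp.2 h4
      _ = a := Real.exp_log ha
  · rw [hgexp]
    have hle : ∀ y ∈ s, Real.log a + (f y - a) / a - (f y - a) ^ 2 / (2 * m * a)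
        ≤ Real.log (f y) := fun y hy => log_pointwise hm hma (hfm y hy)
    have hsum2 : ∑ y ∈ s, (Real.log a + (f y - a) / a - (f y - a) ^ 2 / (2 * m * a))
        ≤ ∑ y ∈ s, Real.log (f y) := Finset.sum_le_sum hle
    have hsum3 : ∑ y ∈ s, (Real.log a + (f y - a) / a - (f y - a) ^ 2 / (2 * m * a))
        = n * Real.log a - n * V / (2 * m * a) := by
      rw [Finset.sum_sub_distrib, Finset.sum_add_distrib, Finset.sum_const, nsmul_eq_mul,
        ← hn_def, ← Finset.sum_div, ← Finset.sum_div, hsa, hsq, zero_div, add_zero]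
    have hL : Real.log a - V / (2 * m * a) ≤ n⁻¹ * ∑ y ∈ s, Real.log (f y) := by
      have h4 : n * (Real.log a - V / (2 * m * a)) ≤ ∑ y ∈ s, Real.log (f y) := by
        calc n * (Real.log a - V / (2 * m * a)) = n * Real.log a - n * V / (2 * m * a) := by
              ring
          _ = ∑ y ∈ s, (Real.log a + (f y - a) / a - (f y - a) ^ 2 / (2 * m * a)) := hsum3.symm
          _ ≤ _ := hsum2
      have h5 := mul_le_mul_of_nonneg_left h4 (inv_nonneg.2 hn.le)
      rwa [← mul_assoc, inv_mul_cancel₀ hn.ne', one_mul] at h5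
    have hexp : Real.exp (Real.log a - V / (2 * m * a))
        ≤ Real.exp (n⁻¹ * ∑ y ∈ s, Real.log (f y)) := Real.exp_le_exp.2 hL
    have hkey : a - V / (2 * m) ≤ Real.exp (Real.log a - V / (2 * m * a)) := by
      rw [Real.exp_sub, Real.exp_log ha]
      have h6 : a / Real.exp (V / (2 * m * a)) = a * Real.exp (-(V / (2 * m * a))) := by
        rw [Real.exp_neg, div_eq_mul_inv]
      rw [h6]
      have h1 : 1 - V / (2 * m * a) ≤ Real.exp (-(V / (2 * m * a))) := by
        linarith [Real.add_one_le_exp (-(V / (2 * m * a)))]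
      have hm' := hm.ne'
      have ha' := ha.ne'
      have h3 : a * (1 - V / (2 * m * a)) = a - V / (2 * m) := by
        field_simp
      calc a - V / (2 * m) = a * (1 - V / (2 * m * a)) := h3.symm
        _ ≤ a * Real.exp (-(V / (2 * m * a))) := mul_le_mul_of_nonneg_left h1 ha.le
    linarith [le_trans hkey hexp]

/-- The orbit of `x` under a finite group action, as a finset. -/
def orbFin (G : Type*) [Group G] [Fintype G] {S : Type*} [MulAction G S]
    [DecidableEq S] (x : S) : Finset S :=
  Finset.univ.image (fun g : G => g • x)

/-- The arithmetic mean of `f` over the orbit of `x`. -/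
noncomputable def orbMean (G : Type*) [Group G] [Fintype G] {S : Type*}
    [MulAction G S] [DecidableEq S] (f : S → ℝ) (x : S) : ℝ :=
  ((orbFin G x).card : ℝ)⁻¹ * ∑ y ∈ orbFin G x, f y

/-- The geometric mean of `f` over the orbit of `x`. -/
noncomputable def orbGeoMean (G : Type*) [Group G] [Fintype G] {S : Type*}
    [MulAction G S] [DecidableEq S] (f : S → ℝ) (x : S) : ℝ :=
  (∏ y ∈ orbFin G x, f y) ^ (((orbFin G x).card : ℝ)⁻¹)

/-- The variance of `f` over the uniform distribution on the orbit of `x`. -/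
noncomputable def orbVar (G : Type*) [Group G] [Fintype G] {S : Type*}
    [MulAction G S] [DecidableEq S] (f : S → ℝ) (x : S) : ℝ :=
  ((orbFin G x).card : ℝ)⁻¹ * ∑ y ∈ orbFin G x, (f y - orbMean G f x) ^ 2

/-- quantitative AM–GM on orbits: for `f > 0` on the orbit,
`0 ≤ ā(x) − ḡ(x) ≤ Var(f)/(2 · min f)` over the orbit of `x`. -/
theorem orbit_am_gm_deficiency {G S : Type*} [Group G] [Fintype G]
    [MulAction G S] [DecidableEq S] (f : S → ℝ) (x : S)
    (hne : (orbFin G x).Nonempty)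
    (hf : ∀ y ∈ orbFin G x, 0 < f y) :
    0 ≤ orbMean G f x - orbGeoMean G f x ∧
    orbMean G f x - orbGeoMean G f x
      ≤ orbVar G f x / (2 * (orbFin G x).inf' hne f) := by
  exact am_gm_deficiency_finset (orbFin G x) hne f hf
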